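/- Suppose n, m, k ∈ ℕ satisfy n ≥ 2^{k+1} + 1 and 2^k + 1 ≤ m ≤ 2^{k+1} (Player 1 is in the weeds at level k; note that then k = ⌊log₂(m−1)⌋ and 1 ≤ 2^k ≤ n−1). Then the bold bid b = 2^k = 2^{⌊log₂(m−1)⌋} is optimal: p(n,m) = 1 − (2^k/n)·p(m, 2^k) − ((n − 2^k)/n)·p(m, n − 2^k), i.e., the maximum in the defining recurrence for p(n,m) is attained at b = 2^k. -/

import Mathlib

namespace GW

def lg (n : ℕ) : ℕ := Nat.log 2 (n - 1)

def N3 (b : ℕ) : ℚ := 6 * (2:ℚ) ^ lg b * b - 4 * (4:ℚ) ^ lg b - 2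

lemma lg_one : lg 1 = 0 := by simp [lg]

lemma lg_bounds {a : ℕ} (ha : 1 ≤ a) : 2 ^ lg a ≤ a ∧ a ≤ 2 ^ (lg a + 1) := by
  rcases eq_or_lt_of_le ha with h | h
  · rw [← h, lg_one]; omega
  · have e1 := Nat.pow_log_le_self 2 (show a - 1 ≠ 0 by omega)
    have e2 := Nat.lt_pow_succ_log_self (b := 2) one_lt_two (a - 1)
    unfold lg
    omega

lemma lg_eq {k n : ℕ} (h1 : 2 ^ k < n) (h2 : n ≤ 2 ^ (k + 1)) : lg n = k := by
  unfold lg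
  exact Nat.log_eq_of_pow_le_of_lt_pow (by omega) (by omega)

lemma lg_lower {n : ℕ} (hn : 2 ≤ n) : 2 ^ lg n < n := by
  have := Nat.pow_log_le_self 2 (show n - 1 ≠ 0 by omega)
  unfold lg; omega

lemma N3_one : N3 1 = 0 := by norm_num [N3, lg_one]

lemma four_eq_sq (t : ℕ) : (4:ℚ) ^ t = 2 ^ t * 2 ^ t := by
  rw [← mul_pow]; norm_num

lemma N3_interval {J a : ℕ} (h1 : 2 ^ J ≤ a) (h2 : a ≤ 2 ^ (J + 1)) :
    N3 a = 6 * (2:ℚ) ^ J * a - 4 * (4:ℚ) ^ J - 2 := by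
  rcases eq_or_lt_of_le h1 with he | hl
  · rcases Nat.eq_zero_or_pos J with hJ0 | hJpos
    · subst hJ0
      have : a = 1 := by omega
      subst this
      rw [N3_one]; norm_num
    · obtain ⟨j, rfl⟩ : ∃ j, J = j + 1 := ⟨J - 1, by omega⟩
      have hpj : 0 < 2 ^ j := Nat.pow_pos (by norm_num)
      have hs : (2:ℕ) ^ (j + 1) = 2 * 2 ^ j := by rw [pow_succ]; ring
      have hlg : lg a = j := lg_eq (by omega) (by omega)
      unfold N3
      rw [hlg, ← he]
      push_cast
      rw [four_eq_sq, four_eq_sq]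
      ring
  · have hlg : lg a = J := lg_eq hl h2
    unfold N3
    rw [hlg]

lemma N3_pow (K : ℕ) : N3 (2 ^ K) = 2 * (4:ℚ) ^ K - 2 := by
  rw [N3_interval (J := K) le_rfl (Nat.pow_le_pow_right (by norm_num) (by omega))]
  push_cast
  rw [four_eq_sq]
  ring

lemma NLB (K : ℕ) {a : ℕ} (ha : 1 ≤ a) : 3 * (2:ℚ) ^ K * a ≤ N3 a + 4 ^ K + 2 := by
  obtain ⟨h1, h2⟩ := lg_bounds ha
  set J := lg a with hJ
  rw [N3_interval h1 h2]
  have ha1 : ((2:ℚ) ^ J) ≤ a := by exact_mod_cast h1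
  have ha2 : (a:ℚ) ≤ 2 ^ (J + 1) := by exact_mod_cast h2
  rw [four_eq_sq J, four_eq_sq K]
  rw [pow_succ] at ha2
  rcases le_or_gt K J with hKJ | hKJ
  · have hyx : (2:ℚ) ^ K ≤ 2 ^ J := by gcongr <;> norm_num
    have e1 : (0:ℚ) ≤ 2 * 2 ^ J - 2 ^ K := by linarith
    have e2 : (0:ℚ) ≤ 3 * a - 2 * 2 ^ J - 2 ^ K := by linarith
    nlinarith [mul_nonneg e1 e2]
  · rcases eq_or_lt_of_le (Nat.succ_le_of_lt hKJ) with he | hl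
    · rw [← he, pow_succ]
      nlinarith
    · have h4x : (2:ℚ) ^ (J + 2) ≤ 2 ^ K := by
        gcongr
        · norm_num
        · omega
      rw [pow_succ, pow_succ] at h4x
      have e1 : (0:ℚ) ≤ 2 ^ K - 2 * 2 ^ J := by nlinarith [pow_pos (show (0:ℚ) < 2 by norm_num) J]
      have e2 : (0:ℚ) ≤ 2 * 2 ^ J + 2 ^ K - 3 * a := by nlinarith [pow_pos (show (0:ℚ) < 2 by norm_num) J]
      nlinarith [mul_nonneg e1 e2]

def Fv (n m : ℕ) : ℚ :=
  if n ≤ 1 then 1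
  else if m ≤ 1 then 0
  else if m ≤ 2 ^ lg n then N3 m / (3 * m * n)
  else 1 - (3 * (2:ℚ) ^ lg n * n - N3 (2 ^ lg n) - 6) / (3 * m * n)

def Zv (m b : ℕ) : ℚ := 3 * m * b * Fv m b

def Tv (n m : ℕ) : ℚ :=
  if m ≤ 2 ^ lg n then 3 * m * n - N3 m
  else 3 * (2:ℚ) ^ lg n * n - N3 (2 ^ lg n) - 6

lemma Fv_opp_one {n : ℕ} (hn : 2 ≤ n) : Fv n 1 = 0 := by
  unfold Fv
  rw [if_neg (by omega), if_pos le_rfl]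

lemma Fv_mover_one {m : ℕ} : Fv 1 m = 1 := by
  unfold Fv
  rw [if_pos le_rfl]

lemma Zv_small {m b : ℕ} (hm : 2 ≤ m) (hb1 : 1 ≤ b) (hb2 : b ≤ 2 ^ lg m) :
    Zv m b = N3 b := by
  rcases eq_or_lt_of_le hb1 with h | h
  · rw [← h, Zv, Fv_opp_one hm, N3_one]; ring
  · have hb2' : ¬ b ≤ 1 := by omega
    unfold Zv Fv
    rw [if_neg (by omega), if_neg hb2', if_pos hb2]
    have h1 : ((m:ℚ)) ≠ 0 := by positivity
    have h2 : ((b:ℚ)) ≠ 0 := by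
      have : 0 < b := by omega
      positivity
    field_simp

lemma Zv_big {m b : ℕ} (hm : 2 ≤ m) (hb : 2 ^ lg m + 1 ≤ b) :
    Zv m b = 3 * m * b - 3 * (2:ℚ) ^ lg m * m + N3 (2 ^ lg m) + 6 := by
  have hb1 : 2 ≤ b := by
    have : 1 ≤ 2 ^ lg m := Nat.one_le_two_pow
    omega
  unfold Zv Fv
  rw [if_neg (by omega), if_neg (by omega), if_neg (by omega)]
  have h1 : ((m:ℚ)) ≠ 0 := by positivity
  have h2 : ((b:ℚ)) ≠ 0 := by positivity
  field_simp
  ring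

lemma Tv_eq {n m : ℕ} (hn : 2 ≤ n) (hm : 2 ≤ m) :
    Fv n m = 1 - Tv n m / (3 * m * n) := by
  have h1 : ((m:ℚ)) ≠ 0 := by positivity
  have h2 : ((n:ℚ)) ≠ 0 := by positivity
  unfold Fv Tv
  rw [if_neg (by omega), if_neg (by omega)]
  by_cases hw : m ≤ 2 ^ lg n
  · rw [if_pos hw, if_pos hw]
    field_simp
    ring
  · rw [if_neg hw, if_neg hw]

lemma ZvLB1 {m a : ℕ} (hm : 2 ≤ m) (ha : 1 ≤ a) :
    3 * (m:ℚ) * a - 3 * m * 2 ^ lg m + N3 (2 ^ lg m) ≤ Zv m a := by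
  have hmk : 2 ^ lg m < m := lg_lower hm
  have hmkQ : ((2:ℚ) ^ lg m) + 1 ≤ m := by exact_mod_cast hmk
  rcases le_or_gt a (2 ^ lg m) with h | h
  · rw [Zv_small hm ha h]
    have haQ : (a:ℚ) ≤ 2 ^ lg m := by exact_mod_cast h
    have hN := NLB (lg m) ha
    rw [N3_pow, four_eq_sq] at *
    have e1 : (0:ℚ) ≤ 2 ^ lg m - a := by linarith
    have e2 : (0:ℚ) ≤ (m:ℚ) - 2 ^ lg m := by linarith
    nlinarith [mul_nonneg e1 e2]
  · rw [Zv_big hm (by omega)]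
    linarith

lemma ZvLB2 {m a K : ℕ} (hm : 2 ≤ m) (ha : 1 ≤ a) (hKm : 2 ^ K + 1 ≤ m) :
    3 * (2:ℚ) ^ K * a - 4 ^ K - 2 ≤ Zv m a := by
  rcases le_or_gt a (2 ^ lg m) with h | h
  · rw [Zv_small hm ha h]
    linarith [NLB K ha]
  · rw [Zv_big hm (by omega)]
    have hN := NLB K (show 1 ≤ 2 ^ lg m from Nat.one_le_two_pow)
    have hc1 : ((2:ℚ) ^ lg m) = ((2 ^ lg m : ℕ) : ℚ) := by push_cast; ring
    rw [← hc1] at hN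
    have hmQ : ((2:ℚ) ^ K) + 1 ≤ m := by exact_mod_cast hKm
    have haQ : ((2:ℚ) ^ lg m) + 1 ≤ a := by exact_mod_cast h
    have e1 : (0:ℚ) ≤ (m:ℚ) - 2 ^ K := by linarith
    have e2 : (0:ℚ) ≤ (a:ℚ) - 2 ^ lg m := by linarith
    nlinarith [mul_nonneg e1 e2]

lemma weeds_n {n m : ℕ} (hn : 2 ≤ n) (hm : 2 ≤ m) (hw : m ≤ 2 ^ lg n) :
    2 ^ (lg m + 1) + 1 ≤ n := by
  have h1 : 2 ^ lg m < m := lg_lower hm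
  have h2 : 2 ^ lg m < 2 ^ lg n := by omega
  have h3 : lg m < lg n := (Nat.pow_lt_pow_iff_right (by norm_num)).mp h2
  have h4 : 2 ^ (lg m + 1) ≤ 2 ^ lg n := Nat.pow_le_pow_right (by norm_num) (by omega)
  have h5 : 2 ^ lg n < n := lg_lower hn
  omega

lemma cast_sub' {n b : ℕ} (h : b ≤ n) : ((n - b : ℕ) : ℚ) = (n:ℚ) - b := by
  push_cast [Nat.cast_sub h]
  ring

lemma N3_m_eq {m : ℕ} (hm : 2 ≤ m) : N3 m = 6 * (2:ℚ) ^ lg m * m - 4 * 4 ^ lg m - 2 := by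
  have := lg_lower hm
  exact N3_interval (by omega) (lg_bounds (by omega)).2

lemma EXw {n m : ℕ} (hn : 2 ≤ n) (hm : 2 ≤ m) (hw : m ≤ 2 ^ lg n) :
    Zv m (2 ^ lg m) + Zv m (n - 2 ^ lg m) = Tv n m := by
  have hnw := weeds_n hn hm hw
  have hps : (2:ℕ) ^ (lg m + 1) = 2 * 2 ^ lg m := by rw [pow_succ]; ring
  have hpk : (1:ℕ) ≤ 2 ^ lg m := Nat.one_le_two_pow
  have hb2 : 2 ^ lg m + 1 ≤ n - 2 ^ lg m := by omega
  rw [Zv_small hm hpk le_rfl, Zv_big hm hb2, Tv, if_pos hw]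
  have hc : ((n - 2 ^ lg m : ℕ) : ℚ) = (n:ℚ) - 2 ^ lg m := by
    rw [cast_sub' (by omega)]; push_cast; ring
  rw [hc, N3_m_eq hm, N3_pow]
  ring

lemma UB {n m b : ℕ} (hn : 2 ≤ n) (hm : 2 ≤ m) (hb1 : 1 ≤ b) (hb2 : b ≤ n - 1) :
    Tv n m ≤ Zv m b + Zv m (n - b) := by
  have hpk : (1:ℕ) ≤ 2 ^ lg m := Nat.one_le_two_pow
  have hnb1 : 1 ≤ n - b := by omega
  have hcb : ((n - b : ℕ) : ℚ) = (n:ℚ) - b := cast_sub' (by omega)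
  by_cases hw : m ≤ 2 ^ lg n
  · have hnw := weeds_n hn hm hw
    have hps : (2:ℕ) ^ (lg m + 1) = 2 * 2 ^ lg m := by rw [pow_succ]; ring
    rw [Tv, if_pos hw]
    rcases le_or_gt b (2 ^ lg m) with hbs | hbl
    · have h1 := ZvLB1 hm hb1
      have h2 : Zv m (n - b) = 3 * m * ((n:ℚ) - b) - 3 * (2:ℚ) ^ lg m * m + N3 (2 ^ lg m) + 6 := by
        rw [Zv_big hm (by omega), hcb]
      rw [h2, N3_pow] at *
      rw [N3_m_eq hm]
      linarith
    · rcases le_or_gt (n - b) (2 ^ lg m) with hbs' | hbl'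
      · have h1 := ZvLB1 hm hnb1
        have h2 : Zv m b = 3 * m * (b:ℚ) - 3 * (2:ℚ) ^ lg m * m + N3 (2 ^ lg m) + 6 :=
          Zv_big hm (by omega)
        rw [hcb] at h1
        rw [h2, N3_pow] at *
        rw [N3_m_eq hm]
        linarith
      · have h1 : Zv m b = 3 * m * (b:ℚ) - 3 * (2:ℚ) ^ lg m * m + N3 (2 ^ lg m) + 6 :=
          Zv_big hm (by omega)
        have h2 : Zv m (n - b) = 3 * m * ((n:ℚ) - b) - 3 * (2:ℚ) ^ lg m * m + N3 (2 ^ lg m) + 6 := by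
          rw [Zv_big hm (by omega), hcb]
        rw [h1, h2, N3_pow] at *
        rw [N3_m_eq hm]
        linarith
  · have hKm : 2 ^ lg n + 1 ≤ m := by omega
    have h1 := ZvLB2 (K := lg n) hm hb1 hKm
    have h2 := ZvLB2 (K := lg n) hm hnb1 hKm
    rw [hcb] at h2
    rw [Tv, if_neg hw, N3_pow]
    linarith

lemma EXm {n m : ℕ} (hn : 2 ≤ n) (hm : 2 ≤ m) (hw : ¬ m ≤ 2 ^ lg n) :
    Zv m (n / 2) + Zv m (n - n / 2) = Tv n m := by
  have hKn : 2 ^ lg n < n := lg_lower hn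
  have hKn2 : n ≤ 2 ^ (lg n + 1) := (lg_bounds (by omega)).2
  have hKm : 2 ^ lg n + 1 ≤ m := by omega
  have hkm : 2 ^ lg n ≤ 2 ^ lg m := by
    have h2 : 2 ^ lg n < 2 ^ (lg m + 1) := by
      have := (lg_bounds (show 1 ≤ m by omega)).2
      omega
    have h3 : lg n ≤ lg m := by
      have := (Nat.pow_lt_pow_iff_right (show 1 < 2 by norm_num)).mp h2
      omega
    exact Nat.pow_le_pow_right (by norm_num) h3
  rcases Nat.eq_zero_or_pos (lg n) with hK0 | hKpos
  · have hn2 : n = 2 := by rw [hK0] at hKn hKn2; omega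
    subst hn2
    have e1 : Zv m 1 = N3 1 := Zv_small hm le_rfl (by omega)
    rw [show (2:ℕ)/2 = 1 by norm_num, show (2:ℕ) - 1 = 1 by norm_num, e1, N3_one,
      Tv, if_neg hw, hK0, N3_pow]
    norm_num
  · obtain ⟨K', hKK⟩ : ∃ K', lg n = K' + 1 := ⟨lg n - 1, by omega⟩
    rw [hKK] at hKn hKn2 hkm
    have hps : (2:ℕ) ^ (K' + 1) = 2 * 2 ^ K' := by rw [pow_succ]; ring
    have hb1 : 2 ^ K' ≤ n / 2 := by omega
    have hb2 : n / 2 ≤ 2 ^ (K' + 1) := by omega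
    have hb3 : 2 ^ K' ≤ n - n / 2 := by omega
    have hb4 : n - n / 2 ≤ 2 ^ (K' + 1) := by omega
    have hz1 : Zv m (n / 2) = N3 (n / 2) := Zv_small hm (by omega) (by omega)
    have hz2 : Zv m (n - n / 2) = N3 (n - n / 2) := Zv_small hm (by omega) (by omega)
    rw [hz1, hz2, N3_interval hb1 hb2, N3_interval hb3 hb4, Tv, if_neg hw, hKK, N3_pow]
    have hcs : ((n / 2 : ℕ) : ℚ) + ((n - n / 2 : ℕ) : ℚ) = (n:ℚ) := by
      rw [cast_sub' (by omega)]; ring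
    rw [four_eq_sq K', four_eq_sq (K' + 1), pow_succ]
    linear_combination (6 * (2:ℚ) ^ K') * hcs

lemma main (p : ℕ → ℕ → ℚ)
    (hp2 : ∀ n : ℕ, 2 ≤ n → p n 1 = 0)
    (hrec : ∀ n m : ℕ, ∀ hn : 2 ≤ n, 2 ≤ m →
      p n m = (Finset.Icc 1 (n - 1)).sup' (Finset.nonempty_Icc.mpr (Nat.le_sub_of_add_le hn))
        (fun b => 1 - (b : ℚ) / (n : ℚ) * p m b
          - ((n - b : ℕ) : ℚ) / (n : ℚ) * p m (n - b))) :
    ∀ N n m : ℕ, n + m ≤ N → 2 ≤ n → 1 ≤ m → p n m = Fv n m := by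
  intro N
  induction N with
  | zero => intro n m h hn hm; omega
  | succ N ih =>
    intro n m hNs hn hm
    rcases eq_or_lt_of_le hm with h1 | h1
    · rw [← h1, hp2 n hn, Fv_opp_one hn]
    · have hm2 : 2 ≤ m := h1
      rw [hrec n m hn hm2]
      have h3 : (0:ℚ) < 3 * m * n := by positivity
      have key : ∀ b ∈ Finset.Icc 1 (n - 1),
          (1 - (b : ℚ) / (n : ℚ) * p m b - ((n - b : ℕ) : ℚ) / (n : ℚ) * p m (n - b))
          = 1 - (Zv m b + Zv m (n - b)) / (3 * m * n) := by
        intro b hb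
        rw [Finset.mem_Icc] at hb
        obtain ⟨hb1, hb2⟩ := hb
        have e1 : p m b = Fv m b := ih m b (by omega) hm2 (by omega)
        have e2 : p m (n - b) = Fv m (n - b) := ih m (n - b) (by omega) hm2 (by omega)
        rw [e1, e2, Zv, Zv, cast_sub' (show b ≤ n by omega)]
        have hm0 : ((m:ℚ)) ≠ 0 := by positivity
        have hn0' : ((n:ℚ)) ≠ 0 := by positivity
        field_simp
        ring
      apply le_antisymm
      · apply Finset.sup'_le
        intro b hb
        rw [key b hb, Tv_eq hn hm2]
        have hb' := Finset.mem_Icc.mp hb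
        have := (div_le_div_iff_of_pos_right h3).mpr (UB hn hm2 hb'.1 hb'.2)
        linarith
      · by_cases hw : m ≤ 2 ^ lg n
        · have hnw := weeds_n hn hm2 hw
          have hps : (2:ℕ) ^ (lg m + 1) = 2 * 2 ^ lg m := by rw [pow_succ]; ring
          have hmem : 2 ^ lg m ∈ Finset.Icc 1 (n - 1) :=
            Finset.mem_Icc.mpr ⟨Nat.one_le_two_pow, by omega⟩
          apply Finset.le_sup'_of_le _ hmem
          rw [key _ hmem, Tv_eq hn hm2, EXw hn hm2 hw]
        · have hmem : n / 2 ∈ Finset.Icc 1 (n - 1) :=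
            Finset.mem_Icc.mpr ⟨by omega, by omega⟩
          apply Finset.le_sup'_of_le _ hmem
          rw [key _ hmem, Tv_eq hn hm2, EXm hn hm2 hw]

end GW

/-- In "Guess Who?", when Player 1 is in the weeds at level `k`
(`n ≥ 2^(k+1) + 1` and `2^k + 1 ≤ m ≤ 2^(k+1)`), the bold bid `b = 2^k`
is optimal: the maximum in the defining recurrence for `p n m` is attained
at `b = 2^k`. -/
theorem guess_who_bold_bid_optimal_in_the_weeds
    (p : ℕ → ℕ → ℚ)
    (hp1 : ∀ m : ℕ, 2 ≤ m → p 1 m = 1)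
    (hp2 : ∀ n : ℕ, 2 ≤ n → p n 1 = 0)
    (hrec : ∀ n m : ℕ, ∀ hn : 2 ≤ n, 2 ≤ m →
      p n m = (Finset.Icc 1 (n - 1)).sup' (Finset.nonempty_Icc.mpr (by omega))
        (fun b => 1 - (b : ℚ) / (n : ℚ) * p m b
          - ((n - b : ℕ) : ℚ) / (n : ℚ) * p m (n - b)))
    (n m k : ℕ) (hn : 2 ^ (k + 1) + 1 ≤ n) (hm1 : 2 ^ k + 1 ≤ m) (hm2 : m ≤ 2 ^ (k + 1)) :
    p n m = 1 - ((2 ^ k : ℕ) : ℚ) / (n : ℚ) * p m (2 ^ k)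
      - ((n - 2 ^ k : ℕ) : ℚ) / (n : ℚ) * p m (n - 2 ^ k) := by
  have h2k : (1:ℕ) ≤ 2 ^ k := Nat.one_le_two_pow
  have hps : (2:ℕ) ^ (k + 1) = 2 * 2 ^ k := by rw [pow_succ]; ring
  have hm2' : 2 ≤ m := by omega
  have hn2 : 2 ≤ n := by omega
  have hmain := GW.main p hp2 hrec
  have hlgm : GW.lg m = k := GW.lg_eq (by omega) hm2
  have hK : k + 1 ≤ GW.lg n := by
    have := (Nat.le_log_iff_pow_le one_lt_two (show n - 1 ≠ 0 by omega)).mpr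
      (show 2 ^ (k + 1) ≤ n - 1 by omega)
    unfold GW.lg
    omega
  have hw : m ≤ 2 ^ GW.lg n :=
    le_trans hm2 (Nat.pow_le_pow_right (by norm_num) hK)
  rw [hmain (n + m) n m le_rfl hn2 (by omega),
      hmain (m + 2 ^ k) m (2 ^ k) le_rfl hm2' h2k,
      hmain (m + (n - 2 ^ k)) m (n - 2 ^ k) le_rfl hm2' (by omega)]
  have hEX := GW.EXw hn2 hm2' hw
  rw [hlgm] at hEX
  rw [GW.Tv_eq hn2 hm2', ← hEX]
  unfold GW.Zv
  have hc1 : ((2 ^ k : ℕ) : ℚ) = (2:ℚ) ^ k := by push_cast; ring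
  have hc2 : ((n - 2 ^ k : ℕ) : ℚ) = (n:ℚ) - 2 ^ k := by
    rw [GW.cast_sub' (by omega)]; push_cast; ring
  rw [hc1, hc2]
  have hm0 : ((m:ℚ)) ≠ 0 := by positivity
  have hn0 : ((n:ℚ)) ≠ 0 := by positivity
  field_simp
  ring
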